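/- Let u be a 1-periodic C² function with m = u - u'' nonnegative, and suppose u ≥ 0. Set C₁ = ∫₀¹ m(x) dx. If ξ ∈ ℝ satisfies u'(ξ) = 0, then for all x ∈ [ξ, ξ+1], |u'(x)| ≤ C₁ + ∫₀¹ u(r) dr. In particular ‖u'‖_∞ ≤ C₁ + ‖u‖_{L¹}. -/

import Mathlib

/-- If `u` is 1-periodic, `C²`, with `m = u - u'' ≥ 0` and `u ≥ 0`, and `u'(ξ) = 0`,
then for all `x ∈ [ξ, ξ+1]`, `|u'(x)| ≤ ∫₀¹ m + ∫₀¹ u`. -/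
theorem deriv_bound_from_momentum
    (u : ℝ → ℝ)
    (hu : ContDiff ℝ 2 u)
    (hper : Function.Periodic u 1)
    (hm_nonneg : ∀ x : ℝ, 0 ≤ u x - deriv (deriv u) x)
    (hu_nonneg : ∀ x : ℝ, 0 ≤ u x)
    (ξ : ℝ)
    (hξ : deriv u ξ = 0) :
    ∀ x ∈ Set.Icc ξ (ξ + 1),
      |deriv u x| ≤ (∫ r in (0:ℝ)..1, (u r - deriv (deriv u) r)) + ∫ r in (0:ℝ)..1, u r := by
  intro x hx
  obtain ⟨hx1, hx2⟩ := hx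
  have hu1 : ContDiff ℝ 1 (deriv u) := by
    have h2 : ContDiff ℝ (1+1 : ℕ) u := by exact_mod_cast hu
    exact ((contDiff_succ_iff_deriv).mp h2).2.2
  have hcu : Continuous u := hu.continuous
  have hcu' : Continuous (deriv u) := hu1.continuous
  have hcu'' : Continuous (deriv (deriv u)) := hu1.continuous_deriv le_rfl
  have hcm : Continuous (fun r => u r - deriv (deriv u) r) := hcu.sub hcu''
  have hperd : Function.Periodic (deriv u) 1 := fun y => by
    have h : (fun z => u (z + 1)) = u := funext hper
    rw [← deriv_comp_add_const u 1 y, h]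
  have hperdd : Function.Periodic (deriv (deriv u)) 1 := fun y => by
    have h : (fun z => deriv u (z + 1)) = deriv u := funext hperd
    rw [← deriv_comp_add_const (deriv u) 1 y, h]
  have hperm : Function.Periodic (fun r => u r - deriv (deriv u) r) 1 :=
    hper.sub hperdd
  -- FTC
  have hftc : ∀ y : ℝ, deriv u y =
      ∫ r in ξ..y, (u r - (u r - deriv (deriv u) r)) := by
    intro y
    have : (∫ r in ξ..y, deriv (deriv u) r) = deriv u y - deriv u ξ :=
      intervalIntegral.integral_deriv_eq_sub
        (fun t _ => (hu1.differentiable one_ne_zero) t)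
        (hcu''.intervalIntegrable _ _)
    rw [hξ, sub_zero] at this
    rw [← this]
    congr 1 with r
    ring
  have hsplit : deriv u x = (∫ r in ξ..x, u r) - ∫ r in ξ..x, (u r - deriv (deriv u) r) := by
    rw [hftc x, ← intervalIntegral.integral_sub (hcu.intervalIntegrable _ _)
      (hcm.intervalIntegrable _ _)]
  -- integrals over [ξ, ξ+1] equal integrals over [0,1]
  have hIu : (∫ r in ξ..ξ+1, u r) = ∫ r in (0:ℝ)..1, u r := by
    simpa using hper.intervalIntegral_add_eq ξ 0
  have hIm : (∫ r in ξ..ξ+1, (u r - deriv (deriv u) r)) =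
      ∫ r in (0:ℝ)..1, (u r - deriv (deriv u) r) := by
    simpa using hperm.intervalIntegral_add_eq ξ 0
  -- monotonicity facts
  have hu0x : 0 ≤ ∫ r in ξ..x, u r :=
    intervalIntegral.integral_nonneg hx1 (fun r _ => hu_nonneg r)
  have hm0x : 0 ≤ ∫ r in ξ..x, (u r - deriv (deriv u) r) :=
    intervalIntegral.integral_nonneg hx1 (fun r _ => hm_nonneg r)
  have hux1 : (∫ r in ξ..x, u r) ≤ ∫ r in ξ..ξ+1, u r := by
    have := intervalIntegral.integral_add_adjacent_intervals (μ := MeasureTheory.volume) (a := ξ) (b := x) (c := ξ+1)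
      (hcu.intervalIntegrable _ _) (hcu.intervalIntegrable _ _)
    have h2 : 0 ≤ ∫ r in x..ξ+1, u r :=
      intervalIntegral.integral_nonneg hx2 (fun r _ => hu_nonneg r)
    linarith
  have hmx1 : (∫ r in ξ..x, (u r - deriv (deriv u) r)) ≤
      ∫ r in ξ..ξ+1, (u r - deriv (deriv u) r) := by
    have := intervalIntegral.integral_add_adjacent_intervals (μ := MeasureTheory.volume) (a := ξ) (b := x) (c := ξ+1)
      (hcm.intervalIntegrable _ _) (hcm.intervalIntegrable _ _)
    have h2 : 0 ≤ ∫ r in x..ξ+1, (u r - deriv (deriv u) r) :=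
      intervalIntegral.integral_nonneg hx2 (fun r _ => hm_nonneg r)
    linarith
  rw [abs_le]
  constructor <;> rw [hsplit] <;> [skip; skip] <;> nlinarith [hIu, hIm, hu0x, hm0x, hux1, hmx1]
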